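/- arXiv:0907.3616 — 3 statements merged into one kernel-verified Lean document; each statement's English description precedes it below -/
import Mathlib

section
/- Let Z > 0 be a random variable with E(1/Z) < ∞ and density g, and let η > 0. Define Γ(π) = E[(log(l(π)/Z))⁺] where l(π) satisfies E[(l(π) − Z)⁺] = π. Then π^{−1/η}·Γ(π) → 0 as π → ∞; equivalently, d·Γ(P̄/d^η) → 0 as d → 0. -/
open Real MeasureTheory Filter

theorem stmt8 {Ω : Type*} [MeasurableSpace Ω] (μ : Measure Ω) [IsProbabilityMeasure μ]
    (Z : Ω → ℝ) (hZmeas : Measurable Z) (hZpos : ∀ ω, 0 < Z ω)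
    (hZint : Integrable (fun ω => 1 / Z ω) μ)
    (η : ℝ) (hη : 0 < η)
    (L : ℝ → ℝ) (hL : ∀ p : ℝ, 0 < p → 0 < L p ∧ (∫ ω, max (L p - Z ω) 0 ∂μ) = p)
    (Γ : ℝ → ℝ) (hΓ : ∀ p : ℝ, 0 < p → Γ p = ∫ ω, max (Real.log (L p / Z ω)) 0 ∂μ) :
    Tendsto (fun p : ℝ => p ^ (-(1 / η)) * Γ p) atTop (nhds 0) := by
  set C := ∫ ω, 1 / Z ω ∂μ with hCdef
  have hCnn : 0 ≤ C := integral_nonneg fun ω => by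
    have := hZpos ω; positivity
  have hη' : 0 < 1 / η := by positivity
  -- Find M with μ {Z ≤ M} ≥ 1/2 (in toReal)
  obtain ⟨M, hM0, hMhalf⟩ :
      ∃ M : ℝ, 0 < M ∧ (1 / 2 : ℝ) ≤ (μ {ω | Z ω ≤ M}).toReal := by
    have hmono : Monotone fun n : ℕ => {ω | Z ω ≤ (n : ℝ)} := by
      intro a b hab ω hω
      simp only [Set.mem_setOf_eq] at hω ⊢
      exact le_trans hω (by exact_mod_cast hab)
    have hU : (⋃ n : ℕ, {ω | Z ω ≤ (n : ℝ)}) = Set.univ := by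
      ext ω
      simp only [Set.mem_iUnion, Set.mem_setOf_eq, Set.mem_univ, iff_true]
      exact exists_nat_ge (Z ω)
    have h1 := tendsto_measure_iUnion_atTop (μ := μ) hmono
    rw [hU, measure_univ] at h1
    have h2 : Tendsto (fun n : ℕ => (μ {ω | Z ω ≤ (n : ℝ)}).toReal) atTop (nhds 1) := by
      have := (ENNReal.tendsto_toReal (by simp : (1 : ENNReal) ≠ ⊤)).comp h1
      exact this
    have h3 := h2.eventually (eventually_ge_nhds (by norm_num : (1 / 2 : ℝ) < 1))
    obtain ⟨n, hn⟩ := h3.exists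
    refine ⟨(n : ℝ) + 1, by positivity, le_trans hn ?_⟩
    have hsub : {ω | Z ω ≤ (n : ℝ)} ⊆ {ω | Z ω ≤ (n : ℝ) + 1} := by
      intro ω hω
      simp only [Set.mem_setOf_eq] at hω ⊢
      linarith
    exact ENNReal.toReal_mono (measure_ne_top μ _) (measure_mono hsub)
  have hsmeas : MeasurableSet {ω | Z ω ≤ M} := measurableSet_le hZmeas measurable_const
  -- key bound : for large p, Γ p ≤ log (4p) + C
  have key : ∀ p : ℝ, 1 ≤ p → 2 * M ≤ p → Γ p ≤ Real.log (4 * p) + C := by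
    intro p hp1 hpM
    have hp0 : 0 < p := lt_of_lt_of_le one_pos hp1
    obtain ⟨hl0, hlint⟩ := hL p hp0
    set l := L p with hldef
    -- integrability of f ω = max (l - Z ω) 0
    have hfmeas : Measurable fun ω => max (l - Z ω) 0 :=
      (measurable_const.sub hZmeas).max measurable_const
    have hfbd : ∀ ω, ‖max (l - Z ω) 0‖ ≤ l := by
      intro ω
      rw [Real.norm_eq_abs, abs_of_nonneg (le_max_right _ _)]
      have := hZpos ω
      exact max_le (by linarith) hl0.le
    have hfint : Integrable (fun ω => max (l - Z ω) 0) μ :=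
      (integrable_const l).mono' hfmeas.aestronglyMeasurable (Eventually.of_forall hfbd)
    -- p ≤ l
    have hpl : p ≤ l := by
      rw [← hlint]
      calc (∫ ω, max (l - Z ω) 0 ∂μ) ≤ ∫ _ω, l ∂μ := by
            refine integral_mono hfint (integrable_const l) fun ω => ?_
            have := hZpos ω
            exact max_le (by linarith) hl0.le
        _ = l := by simp
    -- l ≤ 4 p
    have hl4 : l ≤ 4 * p := by
      have hind : ∀ ω, Set.indicator {ω | Z ω ≤ M} (fun _ => l / 2) ω ≤ max (l - Z ω) 0 := by
        intro ω
        by_cases hmem : ω ∈ {ω | Z ω ≤ M}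
        · rw [Set.indicator_of_mem hmem]
          have hZM : Z ω ≤ M := hmem
          have : Z ω ≤ l / 2 := by linarith
          exact le_trans (by linarith) (le_max_left _ _)
        · rw [Set.indicator_of_notMem hmem]
          exact le_max_right _ _
      have h5 : (∫ ω, Set.indicator {ω | Z ω ≤ M} (fun _ => l / 2) ω ∂μ)
          ≤ ∫ ω, max (l - Z ω) 0 ∂μ := by
        refine integral_mono_of_nonneg (Eventually.of_forall fun ω => ?_) hfint
          (Eventually.of_forall hind)
        exact Set.indicator_nonneg (fun _ _ => by positivity) ω
      rw [hlint, integral_indicator_const _ hsmeas, smul_eq_mul] at h5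
      change (μ {ω | Z ω ≤ M}).toReal * (l / 2) ≤ p at h5
      nlinarith [hl0.le, hMhalf, (μ {ω | Z ω ≤ M}).toReal]
    -- Γ bound
    rw [hΓ p hp0]
    have hub : ∀ ω, max (Real.log (l / Z ω)) 0 ≤ max (Real.log l) 0 + 1 / Z ω := by
      intro ω
      have hz := hZpos ω
      have h6 : Real.log (l / Z ω) = Real.log l + Real.log (1 / Z ω) := by
        rw [Real.log_div hl0.ne' hz.ne', Real.log_div one_ne_zero hz.ne', Real.log_one]
        ring
      have h7 : Real.log (1 / Z ω) ≤ 1 / Z ω := by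
        have := Real.log_le_sub_one_of_pos (show (0:ℝ) < 1 / Z ω by positivity)
        linarith
      refine max_le ?_ (add_nonneg (le_max_right _ _) (by positivity))
      rw [h6]
      exact add_le_add (le_max_left _ _) h7
    have h8 : (∫ ω, max (Real.log (l / Z ω)) 0 ∂μ)
        ≤ ∫ ω, (max (Real.log l) 0 + 1 / Z ω) ∂μ := by
      refine integral_mono_of_nonneg (Eventually.of_forall fun ω => le_max_right _ _)
        ((integrable_const _).add hZint) (Eventually.of_forall hub)
    have h9 : (∫ ω, (max (Real.log l) 0 + 1 / Z ω) ∂μ) = max (Real.log l) 0 + C := by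
      rw [integral_add (integrable_const _) hZint]
      simp [hCdef]
    have h10 : max (Real.log l) 0 ≤ Real.log (4 * p) := by
      refine max_le ?_ ?_
      · exact Real.log_le_log (by positivity) hl4
      · exact Real.log_nonneg (by linarith)
    linarith [h8.trans_eq h9]
  -- Γ p ≥ 0
  have hΓnn : ∀ p : ℝ, 0 < p → 0 ≤ Γ p := by
    intro p hp
    rw [hΓ p hp]
    exact integral_nonneg fun ω => le_max_right _ _
  -- upper tendsto
  have hg : Tendsto (fun p : ℝ => p ^ (-(1 / η)) * (Real.log (4 * p) + C)) atTop (nhds 0) := by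
    have T1 : Tendsto (fun p : ℝ => p ^ (-(1 / η)) * (Real.log 4 + C)) atTop (nhds 0) := by
      simpa using (tendsto_rpow_neg_atTop hη').mul_const (Real.log 4 + C)
    have T2 : Tendsto (fun p : ℝ => p ^ (-(1 / η)) * Real.log p) atTop (nhds 0) := by
      have h := (isLittleO_log_rpow_atTop hη').tendsto_div_nhds_zero
      refine h.congr' ?_
      filter_upwards [eventually_gt_atTop (0 : ℝ)] with p hp
      rw [Real.rpow_neg hp.le, div_eq_inv_mul]
    have := T1.add T2
    rw [add_zero] at this
    refine this.congr' ?_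
    filter_upwards [eventually_gt_atTop (0 : ℝ)] with p hp
    rw [Real.log_mul (by norm_num) hp.ne']
    ring
  refine squeeze_zero' ?_ ?_ hg
  · filter_upwards [eventually_gt_atTop (0 : ℝ)] with p hp
    exact mul_nonneg (Real.rpow_nonneg hp.le _) (hΓnn p hp)
  · filter_upwards [eventually_ge_atTop (1 : ℝ), eventually_ge_atTop (2 * M)] with p hp1 hpM
    have hp0 : (0:ℝ) < p := lt_of_lt_of_le one_pos hp1
    exact mul_le_mul_of_nonneg_left (key p hp1 hpM) (Real.rpow_nonneg hp0.le _)
end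

section
/- Let c : (0,1] → ℝ be measurable with a single sign change: c ≤ 0 on (0,y'] and c ≥ 0 on [y',1] for some y' ∈ (0,1), with strict sign on sets of positive measure on each side. Let {b_l : (0,1] → [0,∞)}_{l>0} be a family of positive integrable functions such that for any 0 < l₁ < l₂ the ratio b_{l₂}(y)/b_{l₁}(y) is strictly decreasing in y. Then the equation ∫₀¹ c(y) b_l(y) dy = 0 has at most one solution l > 0. -/
open Real MeasureTheory

theorem stmt10 (y' : ℝ) (hy' : y' ∈ Set.Ioo (0 : ℝ) 1)
    (c : ℝ → ℝ) (hcmeas : Measurable c)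
    (hneg : ∀ y ∈ Set.Ioc (0 : ℝ) y', c y ≤ 0)
    (hpos : ∀ y ∈ Set.Icc y' 1, 0 ≤ c y)
    (hnegstrict : 0 < volume {y ∈ Set.Ioc (0 : ℝ) y' | c y < 0})
    (hposstrict : 0 < volume {y ∈ Set.Icc y' 1 | 0 < c y})
    (b : ℝ → ℝ → ℝ)
    (hbpos : ∀ l : ℝ, 0 < l → ∀ y ∈ Set.Ioc (0 : ℝ) 1, 0 < b l y)
    (hbint : ∀ l : ℝ, 0 < l → IntegrableOn (fun y => c y * b l y) (Set.Ioc (0 : ℝ) 1))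
    (hratio : ∀ l₁ l₂ : ℝ, 0 < l₁ → l₁ < l₂ →
      StrictAntiOn (fun y => b l₂ y / b l₁ y) (Set.Ioc (0 : ℝ) 1)) :
    ∀ l₁ l₂ : ℝ, 0 < l₁ → 0 < l₂ →
      (∫ y in Set.Ioc (0 : ℝ) 1, c y * b l₁ y) = 0 →
      (∫ y in Set.Ioc (0 : ℝ) 1, c y * b l₂ y) = 0 → l₁ = l₂ := by
  have key : ∀ l₁ l₂ : ℝ, 0 < l₁ → l₁ < l₂ →
      (∫ y in Set.Ioc (0 : ℝ) 1, c y * b l₁ y) = 0 →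
      (∫ y in Set.Ioc (0 : ℝ) 1, c y * b l₂ y) = 0 → False := by
    intro l₁ l₂ hl₁ hlt hI₁ hI₂
    have hl₂ : 0 < l₂ := hl₁.trans hlt
    have hy'mem : y' ∈ Set.Ioc (0 : ℝ) 1 := ⟨hy'.1, hy'.2.le⟩
    have hanti := hratio l₁ l₂ hl₁ hlt
    set r' : ℝ := b l₂ y' / b l₁ y' with hr'
    set h : ℝ → ℝ := fun y => r' * (c y * b l₁ y) - c y * b l₂ y with hh
    have hint1 : IntegrableOn (fun y => r' * (c y * b l₁ y)) (Set.Ioc (0 : ℝ) 1) :=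
      (hbint l₁ hl₁).const_mul r'
    have hint : IntegrableOn h (Set.Ioc (0 : ℝ) 1) := hint1.sub (hbint l₂ hl₂)
    have hIh : (∫ y in Set.Ioc (0 : ℝ) 1, h y) = 0 := by
      simp only [hh]
      rw [integral_sub hint1 (hbint l₂ hl₂), integral_const_mul, hI₁, hI₂]
      ring
    have hnonneg : ∀ y ∈ Set.Ioc (0 : ℝ) 1, 0 ≤ h y := by
      intro y hy
      have hb1 : 0 < b l₁ y := hbpos l₁ hl₁ y hy
      have hfact : h y = (r' - b l₂ y / b l₁ y) * (c y * b l₁ y) := by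
        field_simp [hh]
        ring
      rw [hfact]
      rcases le_or_gt y y' with hle | hgt
      · have hc : c y ≤ 0 := hneg y ⟨hy.1, hle⟩
        have hr : r' ≤ b l₂ y / b l₁ y := by
          rcases lt_or_eq_of_le hle with h' | h'
          · exact (hanti hy hy'mem h').le
          · subst h'; exact le_rfl
        have h1 : r' - b l₂ y / b l₁ y ≤ 0 := by linarith
        have h2 : c y * b l₁ y ≤ 0 := mul_nonpos_of_nonpos_of_nonneg hc hb1.le
        nlinarith
      · have hc : 0 ≤ c y := hpos y ⟨hgt.le, hy.2⟩
        have hr : b l₂ y / b l₁ y ≤ r' := (hanti hy'mem hy hgt).le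
        have h1 : 0 ≤ r' - b l₂ y / b l₁ y := by linarith
        exact mul_nonneg h1 (mul_nonneg hc hb1.le)
    set S : Set ℝ := {y ∈ Set.Ioc (0 : ℝ) y' | c y < 0} \ {y'} with hS
    have hSvol : 0 < volume S := by
      rw [hS, measure_diff_null (measure_singleton y')]
      exact hnegstrict
    have hSpos : ∀ y ∈ S, 0 < h y := by
      rintro y ⟨⟨hy1, hy2⟩, hy3⟩
      have hylt : y < y' := lt_of_le_of_ne hy1.2 (by simpa using hy3)
      have hymem : y ∈ Set.Ioc (0 : ℝ) 1 := ⟨hy1.1, hylt.le.trans hy'.2.le⟩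
      have hb1 : 0 < b l₁ y := hbpos l₁ hl₁ y hymem
      have hfact : h y = (r' - b l₂ y / b l₁ y) * (c y * b l₁ y) := by
        field_simp [hh]
        ring
      rw [hfact]
      have hr : r' < b l₂ y / b l₁ y := hanti hymem hy'mem hylt
      exact mul_pos_of_neg_of_neg (by linarith) (mul_neg_of_neg_of_pos hy2 hb1)
    have hsub : S ⊆ Function.support h ∩ Set.Ioc (0 : ℝ) 1 := by
      rintro y hy
      have := hSpos y hy
      refine ⟨ne_of_gt this, ?_⟩
      rcases hy with ⟨⟨hy1, _⟩, hy3⟩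
      have hylt : y < y' := lt_of_le_of_ne hy1.2 (by simpa using hy3)
      exact ⟨hy1.1, hylt.le.trans hy'.2.le⟩
    have hposInt : 0 < ∫ y in Set.Ioc (0 : ℝ) 1, h y := by
      rw [setIntegral_pos_iff_support_of_nonneg_ae
        ((ae_restrict_iff' measurableSet_Ioc).2 (ae_of_all _ hnonneg)) hint]
      exact lt_of_lt_of_le hSvol (measure_mono hsub)
    linarith
  intro l₁ l₂ h1 h2 e1 e2
  rcases lt_trichotomy l₁ l₂ with h | h | h
  · exact (key l₁ l₂ h1 h e1 e2).elim
  · exact h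
  · exact (key l₂ l₁ h2 h e2 e1).elim
end

section
/- Let h₁ > h₂ > 0, P₁, P₂ > 0 with h₁P₁ < h₂P₂, and L, W > 0. Define P̃₁ = h₂P₂/h₁ and P̃₂ = h₁P₁/h₂ (the swapped powers). Then the transmission times are preserved, T̃ := L/(W log(1+h₁P̃₁)) + L/(W log(1+h₂P̃₂)) = L/(W log(1+h₁P₁)) + L/(W log(1+h₂P₂)), while the energy strictly decreases: L·P̃₁/(W log(1+h₁P̃₁)) + L·P̃₂/(W log(1+h₂P̃₂)) < L·P₁/(W log(1+h₁P₁)) + L·P₂/(W log(1+h₂P₂)). -/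
open Real

lemma key18 {a b : ℝ} (ha : 0 < a) (hab : a < b) :
    a * Real.log (1 + b) < b * Real.log (1 + a) := by
  have hb : 0 < b := ha.trans hab
  have h1 : (1 : ℝ) ∈ Set.Ioi (0:ℝ) := by norm_num
  have h2 : (1 + b) ∈ Set.Ioi (0:ℝ) := by simp; linarith
  have hne : (1 : ℝ) ≠ 1 + b := by linarith
  have hw1 : 0 < 1 - a / b := by
    have : a / b < 1 := (div_lt_one hb).2 hab
    linarith
  have hw2 : 0 < a / b := div_pos ha hb
  have hsum : (1 - a / b) + a / b = 1 := by ring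
  have := strictConcaveOn_log_Ioi.2 h1 h2 hne hw1 hw2 hsum
  simp only [smul_eq_mul, Real.log_one, mul_one, mul_zero, zero_add] at this
  have harg : 1 - a / b + a / b * (1 + b) = 1 + a := by
    field_simp
    ring
  rw [harg] at this
  have h' : a * Real.log (1 + b) / b < Real.log (1 + a) := by
    rw [← div_mul_eq_mul_div]; linarith
  have := (div_lt_iff₀ hb).1 h'
  linarith

theorem stmt18 (h₁ h₂ P₁ P₂ L W : ℝ) (hh₂ : 0 < h₂) (hh : h₂ < h₁)
    (hP₁ : 0 < P₁) (hP₂ : 0 < P₂) (hswap : h₁ * P₁ < h₂ * P₂)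
    (hL : 0 < L) (hW : 0 < W) :
    (L / (W * Real.log (1 + h₁ * (h₂ * P₂ / h₁))) +
        L / (W * Real.log (1 + h₂ * (h₁ * P₁ / h₂))) =
      L / (W * Real.log (1 + h₁ * P₁)) + L / (W * Real.log (1 + h₂ * P₂))) ∧
    (L * (h₂ * P₂ / h₁) / (W * Real.log (1 + h₁ * (h₂ * P₂ / h₁))) +
        L * (h₁ * P₁ / h₂) / (W * Real.log (1 + h₂ * (h₁ * P₁ / h₂))) <
      L * P₁ / (W * Real.log (1 + h₁ * P₁)) +
        L * P₂ / (W * Real.log (1 + h₂ * P₂))) := by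
  have hh₁ : 0 < h₁ := hh₂.trans hh
  have ha : 0 < h₁ * P₁ := mul_pos hh₁ hP₁
  have hb : 0 < h₂ * P₂ := mul_pos hh₂ hP₂
  have e1 : h₁ * (h₂ * P₂ / h₁) = h₂ * P₂ := by field_simp
  have e2 : h₂ * (h₁ * P₁ / h₂) = h₁ * P₁ := by field_simp
  rw [e1, e2]
  set a := h₁ * P₁ with hadef
  set b := h₂ * P₂ with hbdef
  have hLa : 0 < Real.log (1 + a) := Real.log_pos (by linarith)
  have hLb : 0 < Real.log (1 + b) := Real.log_pos (by linarith)
  have hkey := key18 ha hswap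
  constructor
  · ring
  · have hdivlt : a / Real.log (1 + a) < b / Real.log (1 + b) :=
      (div_lt_div_iff₀ hLa hLb).2 hkey
    have hgap : L * P₁ / (W * Real.log (1 + a)) + L * P₂ / (W * Real.log (1 + b))
        - (L * (b / h₁) / (W * Real.log (1 + b)) + L * (a / h₂) / (W * Real.log (1 + a)))
        = L / W * (1 / h₂ - 1 / h₁) * (b / Real.log (1 + b) - a / Real.log (1 + a)) := by
      have hP₁' : P₁ = a / h₁ := by rw [hadef]; field_simp
      have hP₂' : P₂ = b / h₂ := by rw [hbdef]; field_simp
      rw [hP₁', hP₂']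
      field_simp
      ring
    have hpos : 0 < L / W * (1 / h₂ - 1 / h₁) *
        (b / Real.log (1 + b) - a / Real.log (1 + a)) := by
      apply mul_pos (mul_pos (div_pos hL hW) _) (by linarith)
      have : 1 / h₁ < 1 / h₂ := one_div_lt_one_div_of_lt hh₂ hh
      linarith
    linarith [hgap ▸ hpos]
end
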